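/- arXiv:1201.5229 — 3 statements merged into one kernel-verified Lean document; each statement's English description precedes it below -/
import Mathlib

section
/- The matrix G − D is negative semidefinite: for every x ∈ ℝ^n, xᵀ(G − D)x ≤ 0. (This is the Hessian negative-semidefiniteness underlying Theorem 1: a solution of the cross-entropy optimality equations is a maximum.) -/
open Matrix

/-- The matrix `G − D` is negative semidefinite: for every `x ∈ ℝ^n`,
`xᵀ(G − D)x ≤ 0`. Here `v k ∈ ℝ^N` have nonnegative entries, `λ_k > 0`,
`Σ_k λ_k v_k(s) = 1` for every `s`, `G` is the Gram matrix of the `v_k`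
and `D` is diagonal with entries `(1/λ_k)⟨v_k, 𝟙⟩`. -/
theorem gram_sub_diag_negSemidef
    (n N : ℕ) (hn : 0 < n) (hN : 0 < N)
    (v : Fin n → Fin N → ℝ) (hv : ∀ k s, 0 ≤ v k s)
    (lam : Fin n → ℝ) (hlam : ∀ k, 0 < lam k)
    (hnorm : ∀ s : Fin N, ∑ k : Fin n, lam k * v k s = 1)
    (G D : Matrix (Fin n) (Fin n) ℝ)
    (hG : ∀ k k', G k k' = ∑ s : Fin N, v k s * v k' s)
    (hD : D = Matrix.diagonal fun k => (1 / lam k) * ∑ s : Fin N, v k s) :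
    ∀ x : Fin n → ℝ, x ⬝ᵥ ((G - D) *ᵥ x) ≤ 0 := by
  intro x
  have key : ∀ s : Fin N,
      (∑ k : Fin n, x k * v k s) ^ 2 ≤ ∑ k : Fin n, x k ^ 2 * (v k s / lam k) := by
    intro s
    have cs := Finset.sum_mul_sq_le_sq_mul_sq Finset.univ
      (fun k => Real.sqrt (lam k * v k s))
      (fun k => x k * Real.sqrt (v k s / lam k))
    have e1 : ∀ k : Fin n, Real.sqrt (lam k * v k s) * (x k * Real.sqrt (v k s / lam k))
        = x k * v k s := by
      intro k
      rw [mul_left_comm, ← Real.sqrt_mul (mul_nonneg (hlam k).le (hv k s))]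
      have : lam k * v k s * (v k s / lam k) = v k s ^ 2 := by
        field_simp
        rw [mul_comm, mul_div_assoc, div_self (hlam k).ne', mul_one]
      rw [this, Real.sqrt_sq (hv k s)]
    have e2 : ∀ k : Fin n, Real.sqrt (lam k * v k s) ^ 2 = lam k * v k s := by
      intro k; exact Real.sq_sqrt (mul_nonneg (hlam k).le (hv k s))
    have e3 : ∀ k : Fin n, (x k * Real.sqrt (v k s / lam k)) ^ 2
        = x k ^ 2 * (v k s / lam k) := by
      intro k; rw [mul_pow, Real.sq_sqrt (div_nonneg (hv k s) (hlam k).le)]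
    simp only [e1, e2, e3, hnorm s, one_mul] at cs
    exact cs
  have expand : x ⬝ᵥ ((G - D) *ᵥ x)
      = (∑ s : Fin N, (∑ k : Fin n, x k * v k s) ^ 2)
        - ∑ k : Fin n, x k ^ 2 * ((∑ s : Fin N, v k s) / lam k) := by
    simp only [sub_mulVec, dotProduct_sub, hD]
    congr 1
    · have rhs : ∑ s : Fin N, (∑ k : Fin n, x k * v k s) ^ 2
          = ∑ k : Fin n, ∑ k' : Fin n, ∑ s : Fin N, x k * v k s * (x k' * v k' s) := by
        simp only [sq, Finset.sum_mul_sum]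
        rw [Finset.sum_comm]
        exact Finset.sum_congr rfl fun k _ => Finset.sum_comm
      rw [rhs]
      simp only [dotProduct, mulVec, dotProduct, hG, Finset.mul_sum, Finset.sum_mul]
      refine Finset.sum_congr rfl fun k _ => Finset.sum_congr rfl fun k' _ =>
        Finset.sum_congr rfl fun s _ => by ring
    · simp only [dotProduct, mulVec_diagonal]
      refine Finset.sum_congr rfl fun k _ => ?_
      ring
  rw [expand, sub_nonpos]
  calc ∑ s : Fin N, (∑ k : Fin n, x k * v k s) ^ 2
      ≤ ∑ s : Fin N, ∑ k : Fin n, x k ^ 2 * (v k s / lam k) :=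
        Finset.sum_le_sum fun s _ => key s
    _ = ∑ k : Fin n, x k ^ 2 * ((∑ s : Fin N, v k s) / lam k) := by
        rw [Finset.sum_comm]
        refine Finset.sum_congr rfl fun k _ => ?_
        rw [← Finset.mul_sum, Finset.sum_div]
end

section
/- For every x ∈ ℝ^n one has the symmetrization identity xᵀDx − xᵀGx = Σ_{1 ≤ k < k' ≤ n} ( √(λ_{k'}/λ_k)·x_k − √(λ_k/λ_{k'})·x_{k'} )² · ⟨v_k, v_{k'}⟩, and in particular xᵀDx − xᵀGx ≥ 0. -/
open Matrix

/-- Symmetrization identity: `xᵀDx − xᵀGx` equals the sum over pairs `k < k'` of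
`(√(λ_{k'}/λ_k)x_k − √(λ_k/λ_{k'})x_{k'})² ⟨v_k, v_{k'}⟩`, and in particular
`xᵀDx − xᵀGx ≥ 0`. -/
theorem quadratic_form_symmetrization
    (n N : ℕ) (hn : 0 < n) (hN : 0 < N)
    (v : Fin n → Fin N → ℝ) (hv : ∀ k s, 0 ≤ v k s)
    (lam : Fin n → ℝ) (hlam : ∀ k, 0 < lam k)
    (hnorm : ∀ s : Fin N, ∑ k : Fin n, lam k * v k s = 1)
    (G D : Matrix (Fin n) (Fin n) ℝ)
    (hG : ∀ k k', G k k' = ∑ s : Fin N, v k s * v k' s)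
    (hD : D = Matrix.diagonal fun k => (1 / lam k) * ∑ s : Fin N, v k s)
    (x : Fin n → ℝ) :
    x ⬝ᵥ (D *ᵥ x) - x ⬝ᵥ (G *ᵥ x) =
      ∑ k : Fin n, ∑ k' ∈ Finset.univ.filter (fun k' => k < k'),
        (Real.sqrt (lam k' / lam k) * x k - Real.sqrt (lam k / lam k') * x k') ^ 2 *
          (∑ s : Fin N, v k s * v k' s) ∧
    0 ≤ x ⬝ᵥ (D *ᵥ x) - x ⬝ᵥ (G *ᵥ x) := by
  set g : Fin n → Fin n → ℝ := fun k k' => ∑ s : Fin N, v k s * v k' s with hg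
  have hgsymm : ∀ k k', g k' k = g k k' := by
    intro k k'
    simp only [hg]
    exact Finset.sum_congr rfl fun s _ => mul_comm _ _
  have hgnonneg : ∀ k k', 0 ≤ g k k' := fun k k' =>
    Finset.sum_nonneg fun s _ => mul_nonneg (hv k s) (hv k' s)
  -- rewrite the sum of v k over s using the normalization
  have hrow : ∀ k, (∑ s : Fin N, v k s) = ∑ k' : Fin n, lam k' * g k k' := by
    intro k
    calc (∑ s : Fin N, v k s) = ∑ s : Fin N, v k s * (∑ k' : Fin n, lam k' * v k' s) := by
          refine Finset.sum_congr rfl fun s _ => ?_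
          rw [hnorm s, mul_one]
      _ = ∑ s : Fin N, ∑ k' : Fin n, lam k' * (v k s * v k' s) := by
          refine Finset.sum_congr rfl fun s _ => ?_
          rw [Finset.mul_sum]
          exact Finset.sum_congr rfl fun k' _ => by ring
      _ = ∑ k' : Fin n, ∑ s : Fin N, lam k' * (v k s * v k' s) := Finset.sum_comm
      _ = ∑ k' : Fin n, lam k' * g k k' := by
          refine Finset.sum_congr rfl fun k' _ => ?_
          rw [← Finset.mul_sum]
  set F : Fin n → Fin n → ℝ :=
    fun k k' => lam k' / lam k * (x k) ^ 2 * g k k' - x k * x k' * g k k' with hF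
  have hdiff : x ⬝ᵥ (D *ᵥ x) - x ⬝ᵥ (G *ᵥ x) = ∑ k : Fin n, ∑ k' : Fin n, F k k' := by
    have hDterm : x ⬝ᵥ (D *ᵥ x)
        = ∑ k : Fin n, ∑ k' : Fin n, lam k' / lam k * (x k) ^ 2 * g k k' := by
      rw [hD]
      simp only [dotProduct, mulVec_diagonal]
      refine Finset.sum_congr rfl fun k _ => ?_
      rw [hrow k, Finset.mul_sum, Finset.sum_mul, Finset.mul_sum]
      refine Finset.sum_congr rfl fun k' _ => ?_
      have := (hlam k).ne'
      field_simp
    have hGterm : x ⬝ᵥ (G *ᵥ x) = ∑ k : Fin n, ∑ k' : Fin n, x k * x k' * g k k' := by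
      simp only [dotProduct, mulVec, dotProduct]
      refine Finset.sum_congr rfl fun k _ => ?_
      rw [Finset.mul_sum]
      refine Finset.sum_congr rfl fun k' _ => ?_
      rw [hG k k']
      ring
    rw [hDterm, hGterm, ← Finset.sum_sub_distrib]
    refine Finset.sum_congr rfl fun k _ => ?_
    rw [← Finset.sum_sub_distrib]
  have hFdiag : ∀ k, F k k = 0 := by
    intro k
    simp only [hF]
    rw [div_self (hlam k).ne']
    ring
  -- split the double sum into pairs
  have hsplit : ∑ k : Fin n, ∑ k' : Fin n, F k k'
      = ∑ k : Fin n, ∑ k' ∈ Finset.univ.filter (fun k' => k < k'), (F k k' + F k' k) := by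
    have h1 : ∀ k k' : Fin n, F k k'
        = (if k < k' then F k k' else 0) + (if k' < k then F k k' else 0) := by
      intro k k'
      rcases lt_trichotomy k k' with h | h | h
      · simp [h, not_lt_of_gt h]
      · simp [h, hFdiag]
      · simp [h, not_lt_of_gt h]
    calc ∑ k : Fin n, ∑ k' : Fin n, F k k'
        = ∑ k : Fin n, ∑ k' : Fin n,
            ((if k < k' then F k k' else 0) + (if k' < k then F k k' else 0)) := by
          exact Finset.sum_congr rfl fun k _ => Finset.sum_congr rfl fun k' _ => h1 k k'
      _ = (∑ k : Fin n, ∑ k' : Fin n, (if k < k' then F k k' else 0))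
          + ∑ k : Fin n, ∑ k' : Fin n, (if k' < k then F k k' else 0) := by
          rw [← Finset.sum_add_distrib]
          exact Finset.sum_congr rfl fun k _ => Finset.sum_add_distrib
      _ = (∑ k : Fin n, ∑ k' : Fin n, (if k < k' then F k k' else 0))
          + ∑ k : Fin n, ∑ k' : Fin n, (if k < k' then F k' k else 0) := by
          congr 1
          rw [Finset.sum_comm]
      _ = ∑ k : Fin n, ∑ k' : Fin n, (if k < k' then F k k' + F k' k else 0) := by
          rw [← Finset.sum_add_distrib]
          refine Finset.sum_congr rfl fun k _ => ?_
          rw [← Finset.sum_add_distrib]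
          refine Finset.sum_congr rfl fun k' _ => ?_
          split <;> simp
      _ = ∑ k : Fin n, ∑ k' ∈ Finset.univ.filter (fun k' => k < k'), (F k k' + F k' k) := by
          refine Finset.sum_congr rfl fun k _ => ?_
          rw [Finset.sum_filter]
  have hpair : ∀ k k' : Fin n, F k k' + F k' k
      = (Real.sqrt (lam k' / lam k) * x k - Real.sqrt (lam k / lam k') * x k') ^ 2
          * g k k' := by
    intro k k'
    have hk := (hlam k)
    have hk' := (hlam k')
    have ha : Real.sqrt (lam k' / lam k) ^ 2 = lam k' / lam k :=
      Real.sq_sqrt (le_of_lt (div_pos hk' hk))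
    have hb : Real.sqrt (lam k / lam k') ^ 2 = lam k / lam k' :=
      Real.sq_sqrt (le_of_lt (div_pos hk hk'))
    have hab : Real.sqrt (lam k' / lam k) * Real.sqrt (lam k / lam k') = 1 := by
      rw [← Real.sqrt_mul (le_of_lt (div_pos hk' hk))]
      rw [div_mul_div_comm, mul_comm (lam k') (lam k),
        div_self (mul_pos hk hk').ne', Real.sqrt_one]
    have hexp : (Real.sqrt (lam k' / lam k) * x k - Real.sqrt (lam k / lam k') * x k') ^ 2
        = lam k' / lam k * (x k) ^ 2 - 2 * (x k * x k') + lam k / lam k' * (x k') ^ 2 := by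
      have h0 : (Real.sqrt (lam k' / lam k) * x k - Real.sqrt (lam k / lam k') * x k') ^ 2
          = Real.sqrt (lam k' / lam k) ^ 2 * (x k) ^ 2
            - 2 * (Real.sqrt (lam k' / lam k) * Real.sqrt (lam k / lam k')) * (x k * x k')
            + Real.sqrt (lam k / lam k') ^ 2 * (x k') ^ 2 := by ring
      rw [h0, ha, hb, hab]
      ring
    simp only [hF]
    rw [hgsymm k k', hexp]
    ring
  have hmain : x ⬝ᵥ (D *ᵥ x) - x ⬝ᵥ (G *ᵥ x) =
      ∑ k : Fin n, ∑ k' ∈ Finset.univ.filter (fun k' => k < k'),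
        (Real.sqrt (lam k' / lam k) * x k - Real.sqrt (lam k / lam k') * x k') ^ 2 *
          (∑ s : Fin N, v k s * v k' s) := by
    rw [hdiff, hsplit]
    exact Finset.sum_congr rfl fun k _ => Finset.sum_congr rfl fun k' _ => hpair k k'
  refine ⟨hmain, ?_⟩
  rw [hmain]
  refine Finset.sum_nonneg fun k _ => Finset.sum_nonneg fun k' _ => ?_
  exact mul_nonneg (sq_nonneg _) (hgnonneg k k')
end

section
/- If additionally K^s_{c_s} > 0 for every step s, then the likelihood ratio between the original parameters μ and the importance sampling parameters λ has the closed form f(ω, μ)/f(ω, λ) = Π_{k=1}^n (μ_k/λ_k)^{U_k(ω)} · Π_{s=1}^m ⟨K^s, λ⟩ / ⟨K^s, μ⟩, where U_k(ω) = #{ s ∈ {1,…,m} : c_s = k }. -/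
/-- Closed form of the likelihood ratio between the original parameters `μ` and the
importance sampling parameters `λ`:
`f(ω, μ)/f(ω, λ) = Π_k (μ_k/λ_k)^{U_k(ω)} · Π_s ⟨K^s, λ⟩/⟨K^s, μ⟩`. -/
theorem likelihood_ratio_closed_form
    (n m : ℕ) (hn : 0 < n) (hm : 0 < m)
    (K : Fin m → Fin n → ℝ) (hK : ∀ s k, 0 ≤ K s k)
    (c : Fin m → Fin n) (hKc : ∀ s : Fin m, 0 < K s (c s))
    (mu lam : Fin n → ℝ) (hmu : ∀ k, 0 < mu k) (hlam : ∀ k, 0 < lam k)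
    (hKmu : ∀ s : Fin m, 0 < ∑ k : Fin n, K s k * mu k)
    (hKlam : ∀ s : Fin m, 0 < ∑ k : Fin n, K s k * lam k) :
    (∏ s : Fin m, mu (c s) * K s (c s) / (∑ k : Fin n, K s k * mu k)) /
      (∏ s : Fin m, lam (c s) * K s (c s) / (∑ k : Fin n, K s k * lam k)) =
    (∏ k : Fin n, (mu k / lam k) ^ (Finset.univ.filter (fun s : Fin m => c s = k)).card) *
      ∏ s : Fin m, (∑ k : Fin n, K s k * lam k) / (∑ k : Fin n, K s k * mu k) := by
  rw [← Finset.prod_div_distrib]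
  have h1 : ∀ s : Fin m,
      (mu (c s) * K s (c s) / (∑ k : Fin n, K s k * mu k)) /
        (lam (c s) * K s (c s) / (∑ k : Fin n, K s k * lam k)) =
      (mu (c s) / lam (c s)) *
        ((∑ k : Fin n, K s k * lam k) / (∑ k : Fin n, K s k * mu k)) := by
    intro s
    have h2 := (hKc s).ne'
    have h3 := (hlam (c s)).ne'
    have h4 := (hKmu s).ne'
    have h5 := (hKlam s).ne'
    field_simp
  rw [Finset.prod_congr rfl (fun s _ => h1 s), Finset.prod_mul_distrib]
  congr 1
  rw [← Finset.prod_fiberwise_of_maps_to (g := c)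
    (fun s _ => Finset.mem_univ (c s)) (fun s => mu (c s) / lam (c s))]
  refine Finset.prod_congr rfl fun k _ => ?_
  rw [Finset.prod_congr rfl (fun s hs => by rw [(Finset.mem_filter.mp hs).2]),
    Finset.prod_const]
end
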